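/- Let n ≥ 2 and let A be the 2n×2n symmetric block matrix with diagonal blocks A_n^{α_1,β_1}, A_n^{α_2,β_2} and both off-diagonal blocks equal to A_n^{γ,δ}. Set a = α_1 − β_1, b = α_2 − β_2, c = γ − δ, and assume c ≠ 0. Let κ_1, κ_2 be the two (distinct, real) solutions of c κ² + (b − a)κ − c = 0. Then for each 2 ≤ i ≤ n and each s ∈ {1,2}, the vector (κ_s e_i | e_i) is an eigenvector of A with eigenvalue λ_s = −b − c κ_s; in particular λ_1 = (−(a+b) + √((a−b)² + 4c²))/2 and λ_2 = (−(a+b) − √((a−b)² + 4c²))/2, each with eigenspace dimension at least n−1. -/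

import Mathlib

open Matrix Finset

/-- The adjacency matrix `A_n^{α,β}` of a uniform graph: off-diagonal entries `α`,
diagonal entries `β`. -/
def uniformMatrix (n : ℕ) (α β : ℝ) : Matrix (Fin n) (Fin n) ℝ :=
  fun i j => if i = j then β else α

/-- The vector `e_i ∈ ℝ^n` with entry `1` at position `0` (the "first" position),
entry `-1` at position `i`, and `0` elsewhere (intended for `(i : ℕ) ≠ 0`). -/
def evec (n : ℕ) (i : Fin n) : Fin n → ℝ :=
  fun j => if (j : ℕ) = 0 then 1 else if j = i then -1 else 0

lemma uniform_mulVec {n : ℕ} (hn : 2 ≤ n) (α β : ℝ) (i : Fin n) (hi : (i:ℕ) ≠ 0) :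
    (uniformMatrix n α β).mulVec (evec n i) = (β - α) • evec n i := by
  haveI : NeZero n := ⟨by omega⟩
  have hi0 : i ≠ 0 := fun h => hi (by simp [h])
  have hed : ∀ k : Fin n, evec n i k
      = (if k = (0 : Fin n) then (1:ℝ) else 0) + (if k = i then -1 else 0) := by
    intro k
    rcases eq_or_ne k 0 with rfl | hk
    · simp [evec, hi0.symm]
    · have hk' : (k:ℕ) ≠ 0 := fun h => hk (Fin.ext (by simp [h]))
      simp [evec, hk', hk]
  have hsum : ∑ k, evec n i k = 0 := by
    simp [hed, Finset.sum_add_distrib]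
  funext j
  have expand : ∀ k : Fin n, (if j = k then β else α) * evec n i k
      = α * evec n i k + (if j = k then (β - α) * evec n i k else 0) := by
    intro k; by_cases h : j = k <;> simp [h] <;> ring
  calc (uniformMatrix n α β).mulVec (evec n i) j
      = ∑ k, (if j = k then β else α) * evec n i k := by
        simp [mulVec, dotProduct, uniformMatrix]
    _ = α * ∑ k, evec n i k + (β - α) * evec n i j := by
        simp [expand, Finset.sum_add_distrib, Finset.mul_sum]
    _ = ((β - α) • evec n i) j := by simp [hsum]

lemma evec_li {n : ℕ} (hn : 2 ≤ n) :
    LinearIndependent ℝ (fun j : Fin (n-1) => evec n ⟨(j:ℕ)+1, by omega⟩) := by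
  rw [Fintype.linearIndependent_iff]
  intro g hg j
  have := congrFun hg ⟨(j:ℕ)+1, by omega⟩
  simp only [Finset.sum_apply, Pi.smul_apply, Pi.zero_apply, smul_eq_mul] at this
  have hval : ∀ j' : Fin (n-1),
      evec n ⟨(j':ℕ)+1, by omega⟩ ⟨(j:ℕ)+1, by omega⟩ = if j' = j then -1 else 0 := by
    intro j'
    simp only [evec, Fin.mk.injEq]
    rcases eq_or_ne j' j with rfl | h
    · simp
    · have : ¬ ((j:ℕ)+1 = (j':ℕ)+1) := by
        simpa [Fin.ext_iff] using h.symm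
      simp [this, h]
      omega
  rw [Finset.sum_congr rfl (fun j' _ => by rw [hval j'])] at this
  simp only [mul_ite, mul_neg_one, mul_zero, Finset.sum_ite_eq', Finset.mem_univ, if_true] at this
  linarith

/-- Let `n ≥ 2` and let `A` be the `2n×2n` symmetric block matrix with
diagonal blocks `A_n^{α₁,β₁}`, `A_n^{α₂,β₂}` and both off-diagonal blocks `A_n^{γ,δ}`.
Set `a = α₁ − β₁`, `b = α₂ − β₂`, `c = γ − δ ≠ 0`, and let `κ₁ ≠ κ₂` be the two real
solutions of `c κ² + (b − a)κ − c = 0`.  Then for each `(i : ℕ) ≠ 0` and `s ∈ {1,2}`, the vector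
`(κ_s e_i | e_i)` is an eigenvector of `A` with eigenvalue `λ_s = −b − c κ_s`; in particular
`{λ₁, λ₂} = {(−(a+b) + √((a−b)² + 4c²))/2, (−(a+b) − √((a−b)² + 4c²))/2}`, each with
eigenspace dimension at least `n − 1`. -/
theorem two_orbit_bsm_redundant_spectrum {n : ℕ} (hn : 2 ≤ n)
    (α₁ β₁ α₂ β₂ γ δ a b c : ℝ)
    (ha : a = α₁ - β₁) (hb : b = α₂ - β₂) (hc : c = γ - δ) (hc0 : c ≠ 0)
    (κ : Fin 2 → ℝ)
    (hκroot : ∀ s, c * (κ s) ^ 2 + (b - a) * κ s - c = 0)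
    (hκne : κ 0 ≠ κ 1)
    (A : Matrix (Fin n ⊕ Fin n) (Fin n ⊕ Fin n) ℝ)
    (hA : A = Matrix.fromBlocks (uniformMatrix n α₁ β₁) (uniformMatrix n γ δ)
        (uniformMatrix n γ δ) (uniformMatrix n α₂ β₂)) :
    (∀ s : Fin 2, ∀ i : Fin n, (i : ℕ) ≠ 0 →
      A.mulVec (Sum.elim (κ s • evec n i) (evec n i))
        = (-b - c * κ s) • Sum.elim (κ s • evec n i) (evec n i)) ∧
    ({-b - c * κ 0, -b - c * κ 1} : Set ℝ)
      = {(-(a + b) + Real.sqrt ((a - b) ^ 2 + 4 * c ^ 2)) / 2,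
         (-(a + b) - Real.sqrt ((a - b) ^ 2 + 4 * c ^ 2)) / 2} ∧
    (∀ s : Fin 2,
      n - 1 ≤ Module.finrank ℝ
        (Module.End.eigenspace (Matrix.mulVecLin A) (-b - c * κ s))) := by
  have part1 : ∀ s : Fin 2, ∀ i : Fin n, (i : ℕ) ≠ 0 →
      A.mulVec (Sum.elim (κ s • evec n i) (evec n i))
        = (-b - c * κ s) • Sum.elim (κ s • evec n i) (evec n i) := by
    intro s i hi
    have e1 : (uniformMatrix n α₁ β₁) *ᵥ (κ s • evec n i)
        + (uniformMatrix n γ δ) *ᵥ (evec n i)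
        = ((-b - c * κ s) * κ s) • evec n i := by
      rw [mulVec_smul, uniform_mulVec hn _ _ i hi, uniform_mulVec hn _ _ i hi,
        smul_smul, ← add_smul]
      congr 1
      subst ha hb hc
      linear_combination hκroot s
    have e2 : (uniformMatrix n γ δ) *ᵥ (κ s • evec n i)
        + (uniformMatrix n α₂ β₂) *ᵥ (evec n i)
        = (-b - c * κ s) • evec n i := by
      rw [mulVec_smul, uniform_mulVec hn _ _ i hi, uniform_mulVec hn _ _ i hi,
        smul_smul, ← add_smul]
      congr 1
      subst hb hc
      ring
    rw [hA, fromBlocks_mulVec]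
    simp only [Sum.elim_comp_inl, Sum.elim_comp_inr]
    rw [e1, e2]
    funext x
    cases x <;> simp [mul_assoc]
  refine ⟨part1, ?_, ?_⟩
  · -- eigenvalue identification
    have hDnn : (0:ℝ) ≤ (a - b) ^ 2 + 4 * c ^ 2 := by positivity
    have hD2 : (Real.sqrt ((a - b) ^ 2 + 4 * c ^ 2)) ^ 2 = (a - b) ^ 2 + 4 * c ^ 2 :=
      Real.sq_sqrt hDnn
    have hmem : ∀ s : Fin 2,
        (-b - c * κ s) = (-(a + b) + Real.sqrt ((a - b) ^ 2 + 4 * c ^ 2)) / 2 ∨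
        (-b - c * κ s) = (-(a + b) - Real.sqrt ((a - b) ^ 2 + 4 * c ^ 2)) / 2 := by
      intro s
      have hfac : ((-b - c * κ s) - (-(a + b) + Real.sqrt ((a - b) ^ 2 + 4 * c ^ 2)) / 2)
          * ((-b - c * κ s) - (-(a + b) - Real.sqrt ((a - b) ^ 2 + 4 * c ^ 2)) / 2) = 0 := by
        linear_combination c * hκroot s - (1/4) * hD2
      rcases mul_eq_zero.mp hfac with h | h
      · exact Or.inl (sub_eq_zero.mp h)
      · exact Or.inr (sub_eq_zero.mp h)
    have hne : (-b - c * κ 0) ≠ (-b - c * κ 1) := by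
      intro h
      apply hκne
      have hcc : c * κ 0 = c * κ 1 := by linarith
      exact mul_left_cancel₀ hc0 hcc
    rcases hmem 0 with h0 | h0 <;> rcases hmem 1 with h1 | h1
    · exact absurd (h0.trans h1.symm) hne
    · rw [h0, h1]
    · rw [h0, h1, Set.pair_comm]
    · exact absurd (h0.trans h1.symm) hne
  · -- dimension bound
    intro s
    set V := Module.End.eigenspace (Matrix.mulVecLin A) (-b - c * κ s) with hV
    have hmemV : ∀ j : Fin (n-1),
        Sum.elim (κ s • evec n ⟨(j:ℕ)+1, by omega⟩) (evec n ⟨(j:ℕ)+1, by omega⟩) ∈ V := by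
      intro j
      rw [hV, Module.End.mem_eigenspace_iff]
      simpa [Matrix.mulVecLin_apply] using part1 s ⟨(j:ℕ)+1, by omega⟩ (by simp)
    set w : Fin (n-1) → V := fun j =>
      ⟨Sum.elim (κ s • evec n ⟨(j:ℕ)+1, by omega⟩) (evec n ⟨(j:ℕ)+1, by omega⟩), hmemV j⟩
      with hw
    have hwli : LinearIndependent ℝ w := by
      apply LinearIndependent.of_comp (LinearMap.funLeft ℝ ℝ Sum.inr ∘ₗ V.subtype)
      have heq : ((LinearMap.funLeft ℝ ℝ Sum.inr ∘ₗ V.subtype) ∘ w)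
          = fun j : Fin (n-1) => evec n ⟨(j:ℕ)+1, by omega⟩ := by
        funext j k
        rfl
      rw [heq]
      exact evec_li hn
    have := hwli.fintype_card_le_finrank
    simpa using this
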